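/- Let D be a PID with fraction field K, L a field extension of K, and ϑ ∈ L algebraic over K with minimal polynomial q(y) ∈ K[y]. Then there exist b, d ∈ D and a primitive irreducible polynomial p(y) ∈ D[y] such that b·q(y) = d·p(y), and D[ϑ] ≅ D[y]/⟨p(y)⟩ as D-algebras. -/

import Mathlib

open Polynomial

/-- for `D` a PID with fraction field `K`, `ϑ ∈ L` algebraic over
`K` with minimal polynomial `q`, there are `b, d ∈ D` and a primitive irreducible
`p ∈ D[y]` with `b·q = d·p`, and `D[ϑ] ≅ D[y]/⟨p⟩` as `D`-algebras. -/
theorem stmt15 {D : Type*} [CommRing D] [IsDomain D] [IsPrincipalIdealRing D]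
    (K L : Type*) [Field K] [Algebra D K] [IsFractionRing D K]
    [Field L] [Algebra K L] [Algebra D L] [IsScalarTower D K L]
    (ϑ : L) (halg : IsAlgebraic K ϑ) :
    ∃ (b d : D) (p : Polynomial D),
      p.IsPrimitive ∧ Irreducible p ∧
      algebraMap D K b • minpoly K ϑ =
        algebraMap D K d • Polynomial.map (algebraMap D K) p ∧
      Nonempty ((Polynomial D ⧸ Ideal.span {p}) ≃ₐ[D] Algebra.adjoin D {ϑ}) := by
  letI : NormalizationMonoid D :=
    (UniqueFactorizationMonoid.normalizationMonoid : StrongNormalizationMonoid D).toNormalizationMonoid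
  letI : NormalizedGCDMonoid D := UniqueFactorizationMonoid.toNormalizedGCDMonoid D
  set q : K[X] := minpoly K ϑ with hq
  have hq0 : q ≠ 0 := minpoly.ne_zero halg.isIntegral
  have hqirr : Irreducible q := minpoly.irreducible halg.isIntegral
  set P : D[X] := IsLocalization.integerNormalization (nonZeroDivisors D) q with hP
  obtain ⟨b, hb⟩ := IsLocalization.integerNormalization_map_to_map (nonZeroDivisors D) q
  have hb' : P.map (algebraMap D K) = algebraMap D K (b : D) • q := by
    rw [hb, algebraMap_smul]
  have hbK : algebraMap D K (b : D) ≠ 0 := by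
    simpa using (mem_nonZeroDivisors_iff_ne_zero.mp b.property)
  have hP0 : P ≠ 0 := by
    intro h
    apply hq0
    have := hb'
    rw [h, Polynomial.map_zero] at this
    have := this.symm
    rw [smul_eq_C_mul] at this
    exact (mul_eq_zero.mp this).resolve_left (by simpa using hbK)
  set d : D := P.content with hd
  set p : D[X] := P.primPart with hp
  have hdK : algebraMap D K d ≠ 0 := by
    simp only [Ne, map_eq_zero_iff _ (IsFractionRing.injective D K)]
    exact fun h => hP0 (Polynomial.content_eq_zero_iff.mp h)
  have hprim : p.IsPrimitive := P.isPrimitive_primPart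
  -- key identity
  have hkey : algebraMap D K (b : D) • q = algebraMap D K d • p.map (algebraMap D K) := by
    rw [← hb']
    conv_lhs => rw [P.eq_C_content_mul_primPart]
    rw [Polynomial.map_mul, Polynomial.map_C, smul_eq_C_mul]
  -- map of p is associated to q
  have hassoc : Associated q (p.map (algebraMap D K)) := by
    have hu : IsUnit (C ((algebraMap D K d)⁻¹ * algebraMap D K (b : D))) :=
      Polynomial.isUnit_C.mpr ((IsUnit.mk0 _ (inv_ne_zero hdK)).mul (IsUnit.mk0 _ hbK))
    refine ⟨hu.unit, ?_⟩
    rw [smul_eq_C_mul, smul_eq_C_mul] at hkey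
    apply mul_left_cancel₀ (a := C (algebraMap D K d)) (by simpa using hdK)
    rw [IsUnit.unit_spec, ← hkey, mul_comm q, ← mul_assoc, ← C_mul, mul_inv_cancel_left₀ hdK]
  have hpirr : Irreducible p := by
    rw [hprim.irreducible_iff_irreducible_map_fraction_map (K := K)]
    exact hassoc.irreducible hqirr
  -- kernel of evaluation
  have hker : RingHom.ker (Polynomial.aeval (R := D) ϑ) = Ideal.span {p} := by
    ext f
    rw [RingHom.mem_ker, Ideal.mem_span_singleton]
    constructor
    · intro hf
      have hf' : Polynomial.aeval ϑ (f.map (algebraMap D K)) = 0 := by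
        rwa [Polynomial.aeval_map_algebraMap]
      have hdvd : q ∣ f.map (algebraMap D K) := minpoly.dvd K ϑ hf'
      have hdvd' : p.map (algebraMap D K) ∣ f.map (algebraMap D K) :=
        (hassoc.symm.dvd_iff_dvd_left).mpr hdvd
      by_cases hf0 : f = 0
      · exact hf0 ▸ dvd_zero p
      · -- reduce to the primitive part of f
        have hc : algebraMap D K f.content ≠ 0 := by
          simp only [Ne, map_eq_zero_iff _ (IsFractionRing.injective D K)]
          exact fun h => hf0 (Polynomial.content_eq_zero_iff.mp h)
        have hdvd'' : p.map (algebraMap D K) ∣ f.primPart.map (algebraMap D K) := by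
          have hf' : f.map (algebraMap D K) =
              C (algebraMap D K f.content) * f.primPart.map (algebraMap D K) := by
            conv_lhs => rw [f.eq_C_content_mul_primPart]
            rw [Polynomial.map_mul, Polynomial.map_C]
          rw [hf'] at hdvd'
          exact (Associated.dvd_iff_dvd_right
            (associated_unit_mul_left _ _ (Polynomial.isUnit_C.mpr (IsUnit.mk0 _ hc)))).mp hdvd'
        have := hprim.dvd_of_fraction_map_dvd_fraction_map (K := K) hdvd''
        exact (hprim.dvd_primPart_iff_dvd hf0).mp this
    · rintro ⟨g, rfl⟩
      have hpz : Polynomial.aeval (R := D) ϑ p = 0 := by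
        rw [← Polynomial.aeval_map_algebraMap K]
        have := hassoc
        obtain ⟨u, hu⟩ := this
        rw [← hu, map_mul]
        simp [hq, minpoly.aeval]
      rw [map_mul, hpz, zero_mul]
  refine ⟨b, d, p, hprim, hpirr, hkey, ?_⟩
  exact ⟨(Ideal.quotientEquivAlgOfEq D hker.symm).trans
    ((Ideal.quotientKerEquivRange (Polynomial.aeval (R := D) ϑ)).trans
      (Subalgebra.equivOfEq _ _ (Algebra.adjoin_singleton_eq_range_aeval D ϑ).symm))⟩
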